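/- Let G be a finite k-regular simple graph with k ≥ 2. Then G contains an induced cycle C with the following property: if there exist two vertices of C that have a common neighbor not on C, then C has length at most 4. -/

import Mathlib

open SimpleGraph
open scoped Fin.NatCast Fin.CommRing

section Helpers

variable {V : Type*} [Fintype V] [DecidableEq V] {G : SimpleGraph V}

lemma fin_sub_val_add {n : ℕ} {a b : Fin n} (h : a ≠ b) :
    (a - b).val + (b - a).val = n := by
  haveI : NeZero n := ⟨a.pos.ne'⟩
  have h0 : ((a - b) + (b - a)) = (0 : Fin n) := by ring
  have hv : ((a - b).val + (b - a).val) % n = 0 := by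
    have := congrArg Fin.val h0
    rwa [Fin.add_def] at this
  have h1' : (a - b).val ≠ 0 := fun hh => (sub_ne_zero.2 h) (Fin.ext hh)
  have hb1 : (a - b).val < n := (a - b).isLt
  have hb2 : (b - a).val < n := (b - a).isLt
  rcases Nat.lt_or_ge ((a - b).val + (b - a).val) n with hlt | hge
  · rw [Nat.mod_eq_of_lt hlt] at hv; omega
  · rw [Nat.mod_eq_sub_mod hge, Nat.mod_eq_of_lt (by omega)] at hv; omega

/-- Turn "linear adjacency plus wrap-around edge" into full cyclic adjacency. -/
lemma cyc_adj_of_step {m : ℕ} {g : Fin (m + 3) → V}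
    (hstep : ∀ t : ℕ, t + 1 < m + 3 → G.Adj (g t) (g (t + 1 : ℕ)))
    (hwrap : G.Adj (g ((m + 2 : ℕ) : Fin (m + 3))) (g 0)) :
    ∀ t : Fin (m + 3), G.Adj (g t) (g (t + 1)) := by
  intro t
  rcases Nat.lt_or_ge t.val (m + 2) with hlt | hge
  · have h1 : (t : Fin (m + 3)) = ((t.val : ℕ) : Fin (m + 3)) := by
      simp [Fin.cast_val_eq_self]
    have h2 : (t + 1 : Fin (m + 3)) = ((t.val + 1 : ℕ) : Fin (m + 3)) := by
      push_cast
      simp [Fin.cast_val_eq_self]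
    have := hstep t.val (by omega)
    rwa [← h1, ← h2] at this
  · have ht : t.val = m + 2 := by omega
    have h1 : t = ((m + 2 : ℕ) : Fin (m + 3)) := by
      apply Fin.ext
      rw [Fin.val_cast_of_lt (by omega)]
      exact ht
    have h2 : (t + 1 : Fin (m + 3)) = 0 := by
      apply Fin.ext
      rw [Fin.add_def]
      simp [ht]
    rwa [← h1, ← h2] at hwrap

end Helpers

section Main

variable {V : Type*} [Fintype V] [DecidableEq V] {G : SimpleGraph V} [DecidableRel G.Adj]

/-- There is a cycle (as an injective cyclically-adjacent function) of length `n + 3`. -/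
def CycProp (G : SimpleGraph V) (n : ℕ) : Prop :=
  ∃ c : Fin (n + 3) → V, Function.Injective c ∧ ∀ m : Fin (n + 3), G.Adj (c m) (c (m + 1))

lemma exists_cycFun [Nonempty V] {k : ℕ} (hk : 2 ≤ k) (hreg : G.IsRegularOfDegree k) :
    ∃ n, CycProp G n := by
  classical
  set N := Fintype.card V with hN
  set Q : ℕ → Prop := fun m => ∃ p : Fin (m + 1) → V, Function.Injective p ∧
      ∀ t : Fin m, G.Adj (p t.castSucc) (p t.succ) with hQdef
  have hQ0 : Q 0 := ⟨fun _ => Classical.arbitrary V,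
    fun x y _ => Fin.ext (by omega), fun t => t.elim0⟩
  have hQcard : ∀ m, Q m → m + 1 ≤ N := by
    rintro m ⟨p, hp, -⟩
    simpa using Fintype.card_le_of_injective p hp
  set m := Nat.findGreatest Q N with hmdef
  have hm : Q m := Nat.findGreatest_spec (Nat.zero_le N) hQ0
  have hmax : ¬ Q (m + 1) := by
    intro hq
    have h1 : m + 2 ≤ N := hQcard _ hq
    exact Nat.findGreatest_is_greatest (Nat.lt_succ_self m) (by omega) hq
  obtain ⟨p, hpinj, hpadj⟩ := hm
  set u := p (Fin.last m) with hu
  have hnb : ∀ w, G.Adj u w → w ∈ Set.range p := by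
    intro w hw
    by_contra hwr
    apply hmax
    refine ⟨Fin.snoc p w, ?_, ?_⟩
    · intro x y hxy
      induction x using Fin.lastCases with
      | last =>
        induction y using Fin.lastCases with
        | last => rfl
        | cast j =>
          rw [Fin.snoc_last, Fin.snoc_castSucc] at hxy
          exact absurd ⟨j, hxy.symm⟩ hwr
      | cast i =>
        induction y using Fin.lastCases with
        | last =>
          rw [Fin.snoc_last, Fin.snoc_castSucc] at hxy
          exact absurd ⟨i, hxy⟩ hwr
        | cast j =>
          rw [Fin.snoc_castSucc, Fin.snoc_castSucc] at hxy
          exact congrArg Fin.castSucc (hpinj hxy)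
    · intro t
      induction t using Fin.lastCases with
      | last =>
        rw [Fin.succ_last, Fin.snoc_last, Fin.snoc_castSucc]
        exact hw
      | cast j =>
        rw [Fin.succ_castSucc, Fin.snoc_castSucc, Fin.snoc_castSucc]
        exact hpadj j
  -- `u` has at least two neighbors, all on the path
  have hdeg : 1 < (G.neighborFinset u).card := by
    rw [SimpleGraph.card_neighborFinset_eq_degree, hreg u]; omega
  obtain ⟨w₁, hw₁, w₂, hw₂, hww⟩ := Finset.one_lt_card.mp hdeg
  rw [SimpleGraph.mem_neighborFinset] at hw₁ hw₂
  obtain ⟨s₁, hs₁⟩ := hnb w₁ hw₁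
  obtain ⟨s₂, hs₂⟩ := hnb w₂ hw₂
  have hs₁m : s₁ ≠ Fin.last m := by
    intro h; rw [h, ← hu] at hs₁; exact hw₁.ne hs₁
  have hs₂m : s₂ ≠ Fin.last m := by
    intro h; rw [h, ← hu] at hs₂; exact hw₂.ne hs₂
  have hs12 : s₁ ≠ s₂ := fun h => hww (hs₁ ▸ hs₂ ▸ h ▸ rfl)
  set s : Fin (m + 1) := if s₁.val < s₂.val then s₁ else s₂ with hs
  have hsadj : G.Adj u (p s) := by
    rw [hs]; split
    · rw [hs₁]; exact hw₁
    · rw [hs₂]; exact hw₂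
  have hsv : s.val + 2 ≤ m := by
    have h1 : s₁.val < m := by
      have := Fin.val_lt_last hs₁m; simpa using this
    have h2 : s₂.val < m := by
      have := Fin.val_lt_last hs₂m; simpa using this
    have h3 : s₁.val ≠ s₂.val := fun h => hs12 (Fin.ext h)
    rw [hs]; split <;> omega
  obtain ⟨e, he⟩ : ∃ e, m - s.val = e + 2 := ⟨m - s.val - 2, by omega⟩
  refine ⟨e, fun t => p ⟨s.val + t.val, by omega⟩, ?_, ?_⟩
  · intro x y hxy
    have := hpinj hxy
    rw [Fin.mk.injEq] at this
    exact Fin.ext (by omega)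
  · apply cyc_adj_of_step
    · intro t ht
      have h1 : ((t : Fin (e + 3)) : ℕ) = t := Fin.val_cast_of_lt (by omega)
      have h2 : (((t + 1 : ℕ) : Fin (e + 3)) : ℕ) = t + 1 := Fin.val_cast_of_lt (by omega)
      simp only [h1, h2]
      have hlt : s.val + t < m := by omega
      have := hpadj ⟨s.val + t, hlt⟩
      rw [Fin.castSucc_mk, Fin.succ_mk] at this
      convert this using 3; omega
    · have h1 : (((e + 2 : ℕ) : Fin (e + 3)) : ℕ) = e + 2 := Fin.val_cast_of_lt (by omega)
      have h2 : ((0 : Fin (e + 3)) : ℕ) = 0 := rfl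
      simp only [h1, h2]
      have hL : (⟨s.val + (e + 2), by omega⟩ : Fin (m + 1)) = Fin.last m := Fin.ext (by simp; omega)
      have hS : (⟨s.val + 0, by omega⟩ : Fin (m + 1)) = s := Fin.ext (by simp)
      rw [hL, hS, ← hu]
      exact hsadj

end Main

/-- Every finite `k`-regular simple graph with `k ≥ 2` contains an
induced cycle `C` such that if some two vertices of `C` have a common neighbor not
on `C`, then `C` has length at most 4.  (An induced cycle of length `n` is an
embedding of the cycle graph on `n` vertices.) -/
theorem regular_graph_exists_good_induced_cycle
    {V : Type*} [Fintype V] [DecidableEq V] [Nonempty V]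
    (G : SimpleGraph V) [DecidableRel G.Adj] (k : ℕ) (hk : 2 ≤ k) (hreg : G.IsRegularOfDegree k) :
    ∃ (n : ℕ), 3 ≤ n ∧ ∃ f : SimpleGraph.cycleGraph n ↪g G,
      ((∃ (i j : Fin n) (y : V), i ≠ j ∧ (∀ m : Fin n, f m ≠ y) ∧
        G.Adj (f i) y ∧ G.Adj (f j) y) → n ≤ 4) := by
  classical
  have hex : ∃ n, CycProp G n := exists_cycFun hk hreg
  set n := Nat.find hex with hn
  obtain ⟨c, hcinj, hcadj⟩ := Nat.find_spec hex
  have hmin : ∀ m, m < n → ¬ CycProp G m := fun m hm => Nat.find_min hex hm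
  -- the minimal cycle is induced
  have hind : ∀ a b : Fin (n + 3), G.Adj (c a) (c b) →
      (b - a).val = 1 ∨ (a - b).val = 1 := by
    intro a b hab
    by_contra hcon
    push_neg at hcon
    obtain ⟨h1, h2⟩ := hcon
    have hne : a ≠ b := fun h => hab.ne (h ▸ rfl)
    have hsum := fin_sub_val_add hne
    have hδpos : (b - a).val ≠ 0 := fun h => (sub_ne_zero.2 hne.symm) (Fin.ext h)
    set δ := (b - a).val with hδ
    have hδ2 : 2 ≤ δ := by omega
    have hδub : δ ≤ n + 1 := by omega
    apply hmin (δ - 2) (by omega)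
    obtain ⟨e, he⟩ : ∃ e, δ = e + 2 := ⟨δ - 2, by omega⟩
    rw [show δ - 2 = e by omega]
    refine ⟨fun t => c (a + ((t.val : ℕ) : Fin (n + 3))), ?_, ?_⟩
    · intro x y hxy
      have h3 := add_left_cancel (hcinj hxy)
      have hx := Fin.val_cast_of_lt (n := n + 3) (show x.val < n + 3 by omega)
      have hy := Fin.val_cast_of_lt (n := n + 3) (show y.val < n + 3 by omega)
      have := congrArg Fin.val h3
      rw [hx, hy] at this
      exact Fin.ext this
    · apply cyc_adj_of_step
      · intro t ht
        simp only [Fin.val_cast_of_lt (show t < e + 3 by omega),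
          Fin.val_cast_of_lt (show t + 1 < e + 3 by omega)]
        have := hcadj (a + ((t : ℕ) : Fin (n + 3)))
        have harr : a + ((t : ℕ) : Fin (n + 3)) + 1 = a + (((t + 1 : ℕ)) : Fin (n + 3)) := by
          push_cast; ring
        rwa [harr] at this
      · simp only [Fin.val_cast_of_lt (show e + 2 < e + 3 by omega), Fin.val_zero]
        have hba : ((e + 2 : ℕ) : Fin (n + 3)) = b - a := by
          apply Fin.ext
          rw [Fin.val_cast_of_lt (by omega)]
          omega
        rw [hba, Nat.cast_zero, add_zero, add_sub_cancel]
        exact hab.symm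
  -- build the embedding
  refine ⟨n + 3, by omega, ⟨⟨c, hcinj⟩, ?_⟩, ?_⟩
  · intro a b
    constructor
    · intro hab
      rw [SimpleGraph.cycleGraph_adj (n := n + 1)]
      rcases hind a b hab with h | h
      · right
        exact Fin.ext (by rw [Fin.val_one]; exact h)
      · left
        exact Fin.ext (by rw [Fin.val_one]; exact h)
    · intro hab
      rcases (SimpleGraph.cycleGraph_adj (n := n + 1)).mp hab with h | h
      · have : a = b + 1 := by rw [← h]; ring
        rw [this]
        exact (hcadj b).symm
      · have : b = a + 1 := by rw [← h]; ring
        rw [this]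
        exact hcadj a
  -- the common-neighbour property
  rintro ⟨i, j, y, hij, hyoff, hiy, hjy⟩
  by_contra h45
  push_neg at h45
  have hn2 : 2 ≤ n := by omega
  have hyoff' : ∀ m : Fin (n + 3), c m ≠ y := hyoff
  have hiy' : G.Adj (c i) y := hiy
  have hjy' : G.Adj (c j) y := hjy
  have hTex : ∃ d, 1 ≤ d ∧ ∃ a b : Fin (n + 3),
      (b - a).val = d ∧ G.Adj (c a) y ∧ G.Adj (c b) y := by
    refine ⟨(j - i).val, ?_, i, j, rfl, hiy', hjy'⟩
    have : (j - i) ≠ 0 := sub_ne_zero.2 hij.symm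
    have : (j - i).val ≠ 0 := fun h => this (Fin.ext h)
    omega
  set d₀ := Nat.find hTex with hd₀
  obtain ⟨hd₀1, a, b, habd, hay, hby⟩ := Nat.find_spec hTex
  have hab' : a ≠ b := by
    intro h
    rw [h, sub_self] at habd
    simp at habd
    omega
  have hsum := fin_sub_val_add hab'
  have hop : d₀ ≤ n + 3 - d₀ := by
    apply Nat.find_min' hTex
    exact ⟨by omega, b, a, by omega, hby, hay⟩
  have hd₀lt : d₀ + 2 < n + 3 := by omega
  apply hmin (d₀ - 1) (by omega)
  obtain ⟨e, he⟩ : ∃ e, d₀ = e + 1 := ⟨d₀ - 1, by omega⟩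
  rw [show d₀ - 1 = e by omega]
  refine ⟨fun t => if t.val ≤ d₀ then c (a + ((t.val : ℕ) : Fin (n + 3))) else y, ?_, ?_⟩
  · intro x y' hxy
    by_cases hx : x.val ≤ d₀ <;> by_cases hy : y'.val ≤ d₀ <;>
      simp only [hx, hy, if_pos, if_neg, if_true, if_false] at hxy
    · have h3 := add_left_cancel (hcinj hxy)
      have hxv := Fin.val_cast_of_lt (n := n + 3) (show x.val < n + 3 by omega)
      have hyv := Fin.val_cast_of_lt (n := n + 3) (show y'.val < n + 3 by omega)
      have := congrArg Fin.val h3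
      rw [hxv, hyv] at this
      exact Fin.ext this
    · exact absurd hxy (hyoff' _)
    · exact absurd hxy.symm (hyoff' _)
    · apply Fin.ext
      have hx3 := x.isLt
      have hy3 := y'.isLt
      omega
  · apply cyc_adj_of_step
    · intro t ht
      simp only [Fin.val_cast_of_lt (show t < e + 3 by omega),
        Fin.val_cast_of_lt (show t + 1 < e + 3 by omega)]
      rcases Nat.lt_or_ge t d₀ with hlt | hge
      · rw [if_pos (by omega), if_pos (by omega)]
        have := hcadj (a + ((t : ℕ) : Fin (n + 3)))
        have harr : a + ((t : ℕ) : Fin (n + 3)) + 1 = a + (((t + 1 : ℕ)) : Fin (n + 3)) := by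
          push_cast; ring
        rwa [harr] at this
      · have htd : t = d₀ := by omega
        rw [if_pos (by omega), if_neg (by omega)]
        have hba : ((t : ℕ) : Fin (n + 3)) = b - a := by
          apply Fin.ext
          rw [Fin.val_cast_of_lt (by omega)]
          omega
        rw [hba, add_sub_cancel]
        exact hby
    · simp only [Fin.val_cast_of_lt (show e + 2 < e + 3 by omega), Fin.val_zero]
      rw [if_neg (by omega)]; simp only [Nat.zero_le, ↓reduceIte, Nat.cast_zero, add_zero]
      exact hay.symm
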